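/- arXiv:0904.1403 — 3 statements merged into one kernel-verified Lean document; each statement's English description precedes it below -/
import Mathlib

section
/- Let ω(r) = exp(εr) and Ω(r) = exp(δr), where δ > ε > 0. Then for each r > 0 there exists R > 0 such that ωⁿ(R) ≥ Ωⁿ(r) for all n ∈ ℕ (where fⁿ denotes n-fold iteration). -/
theorem stmt_0 (ε δ : ℝ) (hε : 0 < ε) (hδ : ε < δ) (r : ℝ) (hr : 0 < r) :
    ∃ R > 0, ∀ n : ℕ,
      (fun t : ℝ => Real.exp (ε * t))^[n] R ≥ (fun t : ℝ => Real.exp (δ * t))^[n] r := by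
  have hδ0 : 0 < δ := hε.trans hδ
  set m : ℝ := min r 1 with hm
  have hm0 : 0 < m := lt_min hr one_pos
  set E₀ : ℝ := Real.exp (δ * m) with hE₀
  have hE₀1 : 1 ≤ E₀ := by
    rw [hE₀, show (1:ℝ) = Real.exp 0 by simp]
    exact Real.exp_le_exp.mpr (by positivity)
  have hE₀0 : 0 < E₀ := lt_of_lt_of_le one_pos hE₀1
  set C : ℝ := max (Real.log (2 * δ / ε)) (max 1 (8 / (ε * E₀))) with hC
  have hC1 : 1 ≤ C := le_trans (le_max_left 1 _) (le_max_right _ _)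
  have hC0 : 0 ≤ C := by linarith
  have hCexp1 : 2 * δ / ε ≤ Real.exp C := by
    have := Real.exp_le_exp.mpr (le_max_left (Real.log (2 * δ / ε)) (max 1 (8 / (ε * E₀))))
    rwa [Real.exp_log (by positivity)] at this
  have hCexp1' : 2 * δ ≤ ε * Real.exp C := by
    rw [div_le_iff₀ hε] at hCexp1; linarith
  have hC8 : 8 / (ε * E₀) ≤ C := le_trans (le_max_right 1 _) (le_max_right _ _)
  have hC8' : 8 ≤ C * (ε * E₀) := by
    rw [div_le_iff₀ (by positivity)] at hC8; linarith
  have hexpC : C ^ 2 / 4 ≤ Real.exp C := by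
    have h1 : 1 + C / 2 ≤ Real.exp (C / 2) := by linarith [Real.add_one_le_exp (C / 2)]
    have h2 : Real.exp C = Real.exp (C / 2) * Real.exp (C / 2) := by
      rw [← Real.exp_add]; ring_nf
    nlinarith [h1, hC0, h2]
  have hkey : 2 * C ≤ ε * Real.exp C * E₀ := by
    nlinarith [mul_le_mul_of_nonneg_right hexpC (show 0 ≤ ε * E₀ by positivity),
      hC8', hC0]
  refine ⟨(δ * r + C) / ε, by positivity, ?_⟩
  have hΩm : ∀ n, m ≤ (fun t : ℝ => Real.exp (δ * t))^[n] r := by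
    intro n
    induction n with
    | zero =>
      simp only [Function.iterate_zero, id_eq]
      exact min_le_left r 1
    | succ k ih =>
      rw [Function.iterate_succ_apply']
      calc m ≤ 1 := min_le_right r 1
        _ ≤ Real.exp (δ * (fun t : ℝ => Real.exp (δ * t))^[k] r) := by
            rw [show (1:ℝ) = Real.exp 0 by simp]
            exact Real.exp_le_exp.mpr (mul_nonneg hδ0.le (le_trans hm0.le ih))
  have hInv : ∀ n, δ * (fun t : ℝ => Real.exp (δ * t))^[n] r + C
      ≤ ε * (fun t : ℝ => Real.exp (ε * t))^[n] ((δ * r + C) / ε) := by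
    intro n
    induction n with
    | zero =>
      simp only [Function.iterate_zero, id_eq]
      rw [mul_div_cancel₀ _ hε.ne']
    | succ k ih =>
      set x := (fun t : ℝ => Real.exp (δ * t))^[k] r with hx
      set y := (fun t : ℝ => Real.exp (ε * t))^[k] ((δ * r + C) / ε) with hy
      rw [Function.iterate_succ_apply', Function.iterate_succ_apply']
      show δ * Real.exp (δ * x) + C ≤ ε * Real.exp (ε * y)
      have hxm : m ≤ x := hΩm k
      have hstep1 : Real.exp (δ * x) * Real.exp C ≤ Real.exp (ε * y) := by
        rw [← Real.exp_add]
        exact Real.exp_le_exp.mpr (by linarith)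
      have hE : E₀ ≤ Real.exp (δ * x) := Real.exp_le_exp.mpr (by nlinarith)
      have hEpos : 0 < Real.exp (δ * x) := Real.exp_pos _
      have h2 : δ * Real.exp (δ * x) + C ≤ ε * (Real.exp (δ * x) * Real.exp C) := by
        nlinarith [mul_le_mul_of_nonneg_left hE (show 0 ≤ ε * Real.exp C by positivity),
          mul_le_mul_of_nonneg_right hCexp1' hEpos.le]
      nlinarith [hstep1, h2, hε]
  intro n
  have h := hInv n
  have hx := hΩm n
  have := Real.exp_pos (ε * (fun t : ℝ => Real.exp (ε * t))^[n] ((δ * r + C) / ε))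
  nlinarith [hx, hm0, hC0, h]
end

section
/- Let ε, δ be real numbers with δ > ε > 0, set s = 2δ/ε, ω(r) = exp(εr), Ω(r) = exp(δr). If R ≥ max(s·r, (2/ε)·log s) and ω(t) ≥ t for all t ≥ R, then Ωⁿ(r) ≤ (1/s)·ωⁿ(R) for all n ≥ 1. -/
theorem stmt_1 (ε δ r R : ℝ) (hε : 0 < ε) (hδ : ε < δ) (hr : 0 < r)
    (s : ℝ) (hs : s = 2 * δ / ε)
    (hR : R ≥ max (s * r) ((2 / ε) * Real.log s))
    (hfix : ∀ t ≥ R, Real.exp (ε * t) ≥ t) :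
    ∀ n : ℕ, 1 ≤ n →
      (fun t : ℝ => Real.exp (δ * t))^[n] r ≤ (1 / s) * (fun t : ℝ => Real.exp (ε * t))^[n] R := by
  have hδpos : 0 < δ := lt_trans hε hδ
  have hεs : ε * s = 2 * δ := by rw [hs]; field_simp
  have hs2 : (2 : ℝ) < s := by
    rw [hs, lt_div_iff₀ hε]; nlinarith
  have hspos : (0 : ℝ) < s := by linarith
  have hRsr : s * r ≤ R := le_trans (le_max_left _ _) hR
  have hRls : (2 / ε) * Real.log s ≤ R := le_trans (le_max_right _ _) hR
  have hεR2 : 2 * δ * r ≤ ε * R := by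
    nlinarith [mul_le_mul_of_nonneg_left hRsr hε.le]
  have hεRL : 2 * Real.log s ≤ ε * R := by
    rw [div_mul_eq_mul_div, div_le_iff₀ hε] at hRls
    linarith [hRls]
  have hδs : δ * (1 / s) = ε / 2 := by
    field_simp; linarith
  have hgrow : ∀ n : ℕ, R ≤ (fun t : ℝ => Real.exp (ε * t))^[n] R := by
    intro n
    induction n with
    | zero => simp
    | succ k ih =>
      simp only [Function.iterate_succ_apply']
      exact le_trans ih (hfix _ ih)
  intro n hn
  induction n, hn using Nat.le_induction with
  | base =>
    simp only [Function.iterate_one]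
    show Real.exp (δ * r) ≤ 1 / s * Real.exp (ε * R)
    rw [one_div, ← div_eq_inv_mul, le_div_iff₀ hspos]
    calc Real.exp (δ * r) * s = Real.exp (δ * r + Real.log s) := by
          rw [Real.exp_add, Real.exp_log hspos]
      _ ≤ Real.exp (ε * R) := Real.exp_le_exp.mpr (by linarith)
  | succ k hk ih =>
    simp only [Function.iterate_succ_apply'] at *
    set x := (fun t : ℝ => Real.exp (ε * t))^[k] R with hxdef
    have hx : R ≤ x := hgrow k
    have h2x : δ * ((1 / s) * x) = (ε / 2) * x := by rw [← mul_assoc, hδs]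
    calc Real.exp (δ * (fun t : ℝ => Real.exp (δ * t))^[k] r)
        ≤ Real.exp ((ε / 2) * x) := by
          apply Real.exp_le_exp.mpr
          have := mul_le_mul_of_nonneg_left ih hδpos.le
          linarith [h2x]
      _ ≤ 1 / s * Real.exp (ε * x) := by
          rw [one_div, ← div_eq_inv_mul, le_div_iff₀ hspos]
          calc Real.exp ((ε / 2) * x) * s
              = Real.exp ((ε / 2) * x + Real.log s) := by
                rw [Real.exp_add, Real.exp_log hspos]
            _ ≤ Real.exp (ε * x) := by
                apply Real.exp_le_exp.mpr
                nlinarith [mul_le_mul_of_nonneg_left hx hε.le]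
end

section
/- Let α ≥ 0, β ≥ 0, c = 1/(4(α+2)), and let z, ζ be complex numbers with Re z > 0, Re ζ > 0, |z| > (1/c)|ζ|, and |Im z − Im ζ| ≤ α·max(Re z, Re ζ) + β. If Re z ≤ c·|z|, then |z| ≤ 2(α+2)·c·|z| + β; consequently, if additionally β ≤ (1/4)|z|, then Re z > c·|z|. -/
theorem stmt_4 (α β : ℝ) (hα : 0 ≤ α) (hβ : 0 ≤ β) (c : ℝ) (hc : c = 1 / (4 * (α + 2)))
    (z ζ : ℂ) (hz : 0 < z.re) (hζ : 0 < ζ.re)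
    (hmod : ‖z‖ > (1 / c) * ‖ζ‖)
    (him : |z.im - ζ.im| ≤ α * max z.re ζ.re + β) :
    (z.re ≤ c * ‖z‖ → ‖z‖ ≤ 2 * (α + 2) * c * ‖z‖ + β) ∧
      (β ≤ (1 / 4) * ‖z‖ → z.re > c * ‖z‖) := by
  have hcpos : 0 < c := by
    rw [hc]; positivity
  have hζabs : ‖ζ‖ < c * ‖z‖ := by
    rw [gt_iff_lt, div_mul_eq_mul_div, div_lt_iff₀ hcpos] at hmod
    nlinarith [hmod]
  have hζre : ζ.re ≤ ‖ζ‖ := Complex.re_le_norm ζ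
  have hζim : |ζ.im| ≤ ‖ζ‖ := Complex.abs_im_le_norm ζ
  have habs : ‖z‖ ≤ |z.re| + |z.im| := Complex.norm_le_abs_re_add_abs_im z
  have hzre : |z.re| = z.re := abs_of_pos hz
  have him2 : |z.im| ≤ |z.im - ζ.im| + |ζ.im| := by
    calc |z.im| = |(z.im - ζ.im) + ζ.im| := by ring_nf
    _ ≤ |z.im - ζ.im| + |ζ.im| := abs_add_le _ _
  have key : z.re ≤ c * ‖z‖ → ‖z‖ ≤ 2 * (α + 2) * c * ‖z‖ + β := by
    intro h
    have hmax : max z.re ζ.re ≤ c * ‖z‖ := by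
      apply max_le h
      linarith
    have hα2 : α * max z.re ζ.re ≤ α * (c * ‖z‖) :=
      mul_le_mul_of_nonneg_left hmax hα
    nlinarith
  refine ⟨key, fun hb => ?_⟩
  by_contra hcon
  push_neg at hcon
  have h1 := key hcon
  have h2 : 2 * (α + 2) * c = 1 / 2 := by
    rw [hc]; field_simp; ring
  rw [h2] at h1
  have hzpos : 0 < ‖z‖ := by
    have := Complex.re_le_norm z
    linarith
  linarith
end
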